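/- Let G be a finite connected bridgeless graph and let z be an integer such that every isometric cycle of G has length at most z. Then every edge of G is contained in a cycle of length at most z. (Equivalently, η(G) ≤ ζ(G), where η(G) is the least integer such that every edge lies in a cycle of length at most η(G) and ζ(G) is the length of a largest isometric cycle.) -/

import Mathlib

open SimpleGraph Finset

variable {V : Type*}

/-- `o` is an orientation of `G`: each edge of `G` gets exactly one direction. -/
def IsOrientation (G : SimpleGraph V) (o : V → V → Prop) : Prop :=
  (∀ x y, o x y → G.Adj x y) ∧ (∀ x y, G.Adj x y → (o x y ∨ o y x)) ∧
    (∀ x y, o x y → ¬ o y x)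

/-- There is a directed path (with respect to `o`) from `x` to `y` of length at most `n`. -/
def DPathLE (o : V → V → Prop) (n : ℕ) (x y : V) : Prop :=
  ∃ m ≤ n, ∃ f : ℕ → V, f 0 = x ∧ f m = y ∧ (∀ i < m, o (f i) (f (i + 1))) ∧
    (∀ i ≤ m, ∀ j ≤ m, f i = f j → i = j)

/-- `G` admits an orientation of radius at most `R`. -/
def OrientRadiusLE (G : SimpleGraph V) (R : ℕ) : Prop :=
  ∃ o : V → V → Prop, IsOrientation G o ∧
    ∃ u : V, ∀ v : V, DPathLE o R u v ∧ DPathLE o R v u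

/-- `G` admits an orientation of diameter at most `D`. -/
def OrientDiamLE (G : SimpleGraph V) (D : ℕ) : Prop :=
  ∃ o : V → V → Prop, IsOrientation G o ∧ ∀ x y : V, DPathLE o D x y

/-- The edge `e` lies on a cycle of `G` of length at most `n`. -/
def InCycleLE (G : SimpleGraph V) (e : Sym2 V) (n : ℕ) : Prop :=
  ∃ (v : V) (c : G.Walk v v), c.IsCycle ∧ e ∈ c.edges ∧ c.length ≤ n

/-- `G` is bridgeless: no edge is a cut edge. -/
def Bridgeless (G : SimpleGraph V) : Prop :=
  ∀ e ∈ G.edgeSet, ¬ G.IsBridge e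

/-- `c` is a rainbow `k`-edge-coloring of `G`: every two distinct vertices are joined
by a path whose edges receive pairwise distinct colors. -/
def IsRainbowColoring (G : SimpleGraph V) (k : ℕ) (c : Sym2 V → Fin k) : Prop :=
  ∀ x y : V, x ≠ y → ∃ p : G.Walk x y, p.IsPath ∧ (p.edges.map c).Nodup

/-- The rainbow connection number of `G` is at most `k`. -/
def RcLE (G : SimpleGraph V) (k : ℕ) : Prop :=
  ∃ c : Sym2 V → Fin k, IsRainbowColoring G k c

/-- A cycle `C` (as a closed walk) of `G` is isometric if the distance between any two of
its vertices measured in the cycle (i.e. in the subgraph formed by the cycle) equals their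
distance in `G`. -/
def IsIsometricCycle (G : SimpleGraph V) {v : V} (C : G.Walk v v) : Prop :=
  C.IsCycle ∧ ∀ x ∈ C.support, ∀ y ∈ C.support,
    C.toSubgraph.spanningCoe.dist x y = G.dist x y


section Aux

open SimpleGraph Walk

variable {W' : Type*} {G : SimpleGraph W'}

private lemma dart_split {a b : W'} (p : G.Walk a b) {d : G.Dart} (hd : d ∈ p.darts) :
    ∃ (q : G.Walk a d.fst) (r : G.Walk d.snd b),
      p.edges = q.edges ++ d.edge :: r.edges ∧ p.length = q.length + 1 + r.length := by
  induction p with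
  | nil => simp at hd
  | cons h p ih =>
    rw [darts_cons, List.mem_cons] at hd
    rcases hd with h1 | h2
    · subst h1
      exact ⟨Walk.nil, p, by simp [Dart.edge], by simp; omega⟩
    · obtain ⟨q, r, he, hl⟩ := ih h2
      exact ⟨Walk.cons h q, r, by simp [he], by simp [hl]; omega⟩

private lemma cycle_of_count_one [DecidableEq W'] {x : W'} (W : G.Walk x x) {e : Sym2 W'}
    (he : W.edges.count e = 1) :
    ∃ (v : W') (c : G.Walk v v), c.IsCycle ∧ e ∈ c.edges ∧ c.length ≤ W.length := by
  have hmem : e ∈ W.edges := List.count_pos_iff.mp (by omega)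
  rw [Walk.edges, List.mem_map] at hmem
  obtain ⟨d, hd, hde⟩ := hmem
  obtain ⟨q, r, hedges, hlen⟩ := dart_split W hd
  have hcount : q.edges.count e + (r.edges.count e + 1) = 1 := by
    rw [hedges, List.count_append, List.count_cons, hde] at he
    simpa using he
  have hq0 : e ∉ q.edges := by
    rw [← List.count_eq_zero]; omega
  have hr0 : e ∉ r.edges := by
    rw [← List.count_eq_zero]; omega
  set R : G.Walk d.snd d.fst := r.append q with hR
  have hRe : e ∉ R.edges := by
    rw [hR, edges_append]
    simp only [List.mem_append]
    tauto
  have hPe : e ∉ R.bypass.edges := fun h => hRe (edges_bypass_subset R h)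
  have hde' : e = s(d.fst, d.snd) := by rw [← hde]; rfl
  refine ⟨d.fst, Walk.cons d.adj R.bypass, ?_, ?_, ?_⟩
  · rw [cons_isCycle_iff]
    exact ⟨R.bypass_isPath, by rw [← hde']; exact hPe⟩
  · rw [edges_cons, hde']; exact List.mem_cons_self
  · have := length_bypass_le R
    have hRl : R.length = r.length + q.length := length_append r q
    simp only [length_cons]
    omega

private lemma spanningCoe_edgeSet_aux (H : G.Subgraph) : H.spanningCoe.edgeSet = H.edgeSet := by
  ext f
  induction f using Sym2.ind with
  | _ a b => simp [Subgraph.mem_edgeSet]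

end Aux

/-- If every isometric cycle of a connected bridgeless graph `G` has length
at most `z`, then every edge of `G` lies on a cycle of length at most `z` (i.e. η(G) ≤ ζ(G)). -/
theorem eta_le_zeta [Fintype V] (G : SimpleGraph V)
    (hconn : G.Connected) (hbl : Bridgeless G) (z : ℕ)
    (hz : ∀ (v : V) (C : G.Walk v v), IsIsometricCycle G C → C.length ≤ z) :
    ∀ e ∈ G.edgeSet, InCycleLE G e z := by
  classical
  intro e he
  have hnb : ¬ G.IsBridge e := hbl e he
  have hex : ∃ n : ℕ, ∃ (w : V) (c : G.Walk w w), c.IsCycle ∧ e ∈ c.edges ∧ c.length = n := by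
    by_contra hcon
    apply hnb
    rw [SimpleGraph.isBridge_iff_mem_and_forall_cycle_notMem he]
    exact fun w c hc hce => hcon ⟨c.length, w, c, hc, hce, rfl⟩
  obtain ⟨w, C, hC, heC, hlenC⟩ := Nat.find_spec hex
  have hmin : ∀ m, m < Nat.find hex →
      ¬ ∃ (w : V) (c : G.Walk w w), c.IsCycle ∧ e ∈ c.edges ∧ c.length = m :=
    fun m hm => Nat.find_min hex hm
  have hiso : IsIsometricCycle G C := by
    refine ⟨hC, ?_⟩
    intro x hx y hy
    set H := C.toSubgraph.spanningCoe with hH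
    set C1 := C.rotate x hx with hC1def
    have hC1cyc : C1.IsCycle := hC.rotate hx
    have hsub : C1.toSubgraph = C.toSubgraph := Walk.toSubgraph_rotate C hx
    have hy1 : y ∈ C1.support := by
      rw [← Walk.mem_verts_toSubgraph, hsub, Walk.mem_verts_toSubgraph]; exact hy
    have heC1 : e ∈ C1.edges := (Walk.rotate_edges C x hx).mem_iff.mpr heC
    set A1 := C1.takeUntil y hy1 with hA1def
    set A2 := C1.dropUntil y hy1 with hA2def
    have hspec : A1.append A2 = C1 := Walk.take_spec C1 hy1
    have hC1len : C1.length = C.length := by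
      have h := (Walk.rotate_darts C x hx).perm.length_eq
      rwa [Walk.length_darts, Walk.length_darts] at h
    have hab : A1.length + A2.length = C.length := by
      rw [← hC1len, ← hspec, Walk.length_append]
    have hedgesC1 : C1.edges = A1.edges ++ A2.edges := by
      conv_lhs => rw [← hspec]
      exact Walk.edges_append A1 A2
    have hedgeH : ∀ f ∈ C1.edges, f ∈ H.edgeSet := by
      intro f hf
      rw [hH, spanningCoe_edgeSet_aux, ← hsub]
      exact (Walk.mem_edges_toSubgraph C1).mpr hf
    have hsub1 : ∀ f ∈ A1.edges, f ∈ H.edgeSet := fun f hf =>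
      hedgeH f (by rw [hedgesC1]; exact List.mem_append_left _ hf)
    have hsub2 : ∀ f ∈ A2.edges, f ∈ H.edgeSet := fun f hf =>
      hedgeH f (by rw [hedgesC1]; exact List.mem_append_right _ hf)
    have hdA1 : H.dist x y ≤ A1.length := by
      have h := SimpleGraph.dist_le (A1.transfer H hsub1)
      rwa [Walk.length_transfer] at h
    have hdA2 : H.dist x y ≤ A2.length := by
      have h := SimpleGraph.dist_le (A2.transfer H hsub2)
      rw [Walk.length_transfer] at h
      rwa [SimpleGraph.dist_comm] at h
    have hGH : G.dist x y ≤ H.dist x y := by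
      have hr : H.Reachable x y := ⟨A1.transfer H hsub1⟩
      obtain ⟨p, hp⟩ := hr.exists_walk_length_eq_dist
      have h := SimpleGraph.dist_le (p.mapLe (C.toSubgraph.spanningCoe_le))
      rwa [Walk.length_map, hp] at h
    by_contra hne
    have hlt : G.dist x y < H.dist x y := lt_of_le_of_ne hGH (fun hh => hne hh.symm)
    obtain ⟨Qw, hQw⟩ := hconn.exists_walk_length_eq_dist x y
    set Q := Qw.bypass with hQdef
    have hQpath : Q.IsPath := Qw.bypass_isPath
    have hQlen : Q.length = G.dist x y :=
      le_antisymm (hQw ▸ Qw.length_bypass_le) (SimpleGraph.dist_le Q)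
    have hkb1 : Q.length < A1.length := by omega
    have hkb2 : Q.length < A2.length := by omega
    have hcC1 : C1.edges.count e = 1 := hC1cyc.isTrail.count_edges_eq_one heC1
    have hsplit : A1.edges.count e + A2.edges.count e = 1 := by
      rw [← List.count_append, ← hedgesC1]; exact hcC1
    have key : ∀ (W : G.Walk x x), W.edges.count e = 1 → W.length < C.length → False := by
      intro W hWc hWl
      obtain ⟨v', c', hc', hec', hlc'⟩ := cycle_of_count_one W hWc
      exact hmin c'.length (by omega) ⟨v', c', hc', hec', rfl⟩
    by_cases hA1e : e ∈ A1.edges <;> by_cases hQe : e ∈ Q.edges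
    · -- e in A1 and in Q : use Q ++ A2
      apply key (Q.append A2)
      · rw [Walk.edges_append, List.count_append]
        have h1 : 0 < A1.edges.count e := List.count_pos_iff.mpr hA1e
        have h2 : Q.edges.count e = 1 := hQpath.isTrail.count_edges_eq_one hQe
        omega
      · rw [Walk.length_append]; omega
    · -- e in A1, not in Q : use A1 ++ Q.reverse
      apply key (A1.append Q.reverse)
      · rw [Walk.edges_append, List.count_append, Walk.edges_reverse, List.count_reverse]
        have h1 : 0 < A1.edges.count e := List.count_pos_iff.mpr hA1e
        have h2 : Q.edges.count e = 0 := List.count_eq_zero.mpr hQe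
        omega
      · rw [Walk.length_append, Walk.length_reverse]; omega
    · -- e not in A1, in Q : use A1 ++ Q.reverse
      apply key (A1.append Q.reverse)
      · rw [Walk.edges_append, List.count_append, Walk.edges_reverse, List.count_reverse]
        have h1 : A1.edges.count e = 0 := List.count_eq_zero.mpr hA1e
        have h2 : Q.edges.count e = 1 := hQpath.isTrail.count_edges_eq_one hQe
        omega
      · rw [Walk.length_append, Walk.length_reverse]; omega
    · -- e not in A1, not in Q : use Q ++ A2
      apply key (Q.append A2)
      · rw [Walk.edges_append, List.count_append]
        have h1 : A1.edges.count e = 0 := List.count_eq_zero.mpr hA1e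
        have h2 : Q.edges.count e = 0 := List.count_eq_zero.mpr hQe
        omega
      · rw [Walk.length_append]; omega
  exact ⟨w, C, hC, heC, le_trans (le_of_eq rfl) (hz w C hiso)⟩
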